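/- arXiv:1602.06719 — 3 statements merged into one kernel-verified Lean document; each statement's English description precedes it below -/
import Mathlib

section
/- Let $L$ be a positive linear functional with $L(1)=1$, $x \ge 0$, $b := L(\mathrm{id})$, and $\hat{L}(f) := L(f) + f(x) - f(b)$. Let $g$ be twice continuously differentiable on $[0,\infty)$ with bounded second derivative, and suppose $L((t-x)^2) \le A$ for some $A \ge 0$. Then $|\hat{L}(g) - g(x)| \le \|g''\|_\infty \big(A + (b-x)^2\big)$. -/
open Set

/-- Taylor-type bound: if `|g''| ≤ C` on `[0,∞)` and `x, t ≥ 0` then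
`|g t - g x - g'(x)(t-x)| ≤ C (t-x)^2`. -/
lemma taylor_key (g : ℝ → ℝ) (hg : ContDiff ℝ 2 g) (C : ℝ)
    (hC : ∀ u, 0 ≤ u → |deriv (deriv g) u| ≤ C) (x : ℝ) (hx : 0 ≤ x)
    (t : ℝ) (ht : 0 ≤ t) :
    |g t - g x - deriv g x * (t - x)| ≤ C * (t - x) ^ 2 := by
  have hg1 : Differentiable ℝ g := (hg.differentiable (by norm_num))
  have hg2 : Differentiable ℝ (deriv g) := by
    have := (hg.iterate_deriv' 1 1)
    simpa using ((hg.iterate_deriv' 1 1).differentiable (by norm_num))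
  set s := Set.uIcc x t with hs
  have hconv : Convex ℝ s := convex_uIcc x t
  have hmem : ∀ u ∈ s, 0 ≤ u := by
    intro u hu
    have := hu.1
    have : min x t ≤ u := hu.1
    exact le_trans (le_min hx ht) this
  -- Step 1: |deriv g u - deriv g x| ≤ C * |u - x| on s
  have step1 : ∀ u ∈ s, |deriv g u - deriv g x| ≤ C * |u - x| := by
    intro u hu
    have := Convex.norm_image_sub_le_of_norm_deriv_le
      (f := deriv g) (s := s) (C := C)
      (fun v _ => hg2 v) (fun v hv => hC v (hmem v hv)) hconv
      (left_mem_uIcc) hu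
    simpa [Real.norm_eq_abs] using this
  -- Step 2: apply MVT to h := g - affine
  set h : ℝ → ℝ := fun u => g u - g x - deriv g x * (u - x) with hh
  have hderiv : ∀ u ∈ s, HasDerivWithinAt h (deriv g u - deriv g x) s u := by
    intro u hu
    have : HasDerivAt h (deriv g u - deriv g x) u := by
      have h1 : HasDerivAt g (deriv g u) u := (hg1 u).hasDerivAt
      have h2 : HasDerivAt (fun v : ℝ => g x + deriv g x * (v - x)) (deriv g x) u := by
        simpa using ((hasDerivAt_id u).sub_const x).const_mul (deriv g x) |>.const_add (g x)
      simpa [hh, sub_sub, Pi.sub_def] using h1.sub h2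
    exact this.hasDerivWithinAt
  have bound : ∀ u ∈ s, ‖deriv g u - deriv g x‖ ≤ C * |t - x| := by
    intro u hu
    have h1 := step1 u hu
    have huI : u ∈ Set.uIcc x t := hu
    have h2 : |u - x| ≤ |t - x| := by
      rcases le_total x t with hle | hle
      · rw [uIcc_of_le hle] at huI
        rw [abs_of_nonneg (by linarith [huI.1]), abs_of_nonneg (by linarith)]
        linarith [huI.2]
      · rw [uIcc_of_ge hle] at huI
        rw [abs_of_nonpos (by linarith [huI.2]), abs_of_nonpos (by linarith)]
        linarith [huI.1]
    have hC0 : 0 ≤ C := le_trans (abs_nonneg _) (hC 0 le_rfl)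
    calc ‖deriv g u - deriv g x‖ = |deriv g u - deriv g x| := rfl
      _ ≤ C * |u - x| := h1
      _ ≤ C * |t - x| := by nlinarith [abs_nonneg (u - x)]
  have := Convex.norm_image_sub_le_of_norm_hasDerivWithin_le
    hderiv bound hconv left_mem_uIcc right_mem_uIcc
  have hx0 : h x = 0 := by simp [hh]
  have : |h t| ≤ C * |t - x| * |t - x| := by
    simpa [hx0, Real.norm_eq_abs] using this
  calc |g t - g x - deriv g x * (t - x)| = |h t| := rfl
    _ ≤ C * |t - x| * |t - x| := this
    _ = C * (t - x) ^ 2 := by rw [mul_assoc, ← abs_mul, ← sq, abs_sq]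

theorem auxiliary_operator_second_order_bound (L : (ℝ → ℝ) → ℝ)
    (hadd : ∀ f g : ℝ → ℝ, L (f + g) = L f + L g)
    (hsmul : ∀ (c : ℝ) (f : ℝ → ℝ), L (c • f) = c * L f)
    (hpos : ∀ f : ℝ → ℝ, (∀ t, 0 ≤ t → 0 ≤ f t) → 0 ≤ L f)
    (hone : L (fun _ => 1) = 1)
    (x : ℝ) (hx : 0 ≤ x)
    (b : ℝ) (hb : b = L (fun t => t))
    (g : ℝ → ℝ) (hg : ContDiff ℝ 2 g)
    (C : ℝ) (hC : ∀ u, 0 ≤ u → |deriv (deriv g) u| ≤ C)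
    (A : ℝ) (hA : 0 ≤ A) (hLA : L (fun t => (t - x) ^ 2) ≤ A) :
    |(L g + g x - g b) - g x| ≤ C * (A + (b - x) ^ 2) := by
  have hC0 : 0 ≤ C := le_trans (abs_nonneg _) (hC 0 le_rfl)
  have hb0 : 0 ≤ b := hb ▸ hpos (fun t => t) (fun t ht => ht)
  set φ : ℝ → ℝ := fun t => g t - g x - deriv g x * (t - x) with hφ
  have key : ∀ t, 0 ≤ t → |φ t| ≤ C * (t - x) ^ 2 :=
    fun t ht => taylor_key g hg C hC x hx t ht
  -- compute L φ
  have hLone : ∀ c : ℝ, L (fun _ => c) = c := by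
    intro c
    rw [show (fun _ : ℝ => c) = c • (fun _ : ℝ => (1:ℝ)) from funext fun u => by simp [Pi.smul_apply],
      hsmul, hone, mul_one]
  have hLφ : L φ = L g - g x - deriv g x * (b - x) := by
    have hdecomp : φ = g + ((- deriv g x) • (fun t : ℝ => t) +
        (fun _ : ℝ => deriv g x * x - g x)) := by
      funext u; simp [hφ]; ring
    rw [hdecomp, hadd, hadd, hsmul, hLone, ← hb]; ring
  -- bound |L φ| ≤ C * A
  have hq0 : 0 ≤ L (fun t => (t - x) ^ 2) := hpos _ (fun t _ => sq_nonneg _)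
  have hup : L φ ≤ C * A := by
    have h1 : 0 ≤ L (C • (fun t : ℝ => (t - x) ^ 2) + (-1 : ℝ) • φ) := by
      apply hpos
      intro t ht
      have := key t ht
      have := abs_le.mp this
      simp only [Pi.add_apply, Pi.smul_apply, smul_eq_mul]
      linarith [this.2]
    rw [hadd, hsmul, hsmul] at h1
    nlinarith
  have hlo : -(C * A) ≤ L φ := by
    have h1 : 0 ≤ L (C • (fun t : ℝ => (t - x) ^ 2) + φ) := by
      apply hpos
      intro t ht
      have := abs_le.mp (key t ht)
      simp only [Pi.add_apply, Pi.smul_apply, smul_eq_mul]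
      linarith [this.1]
    rw [hadd, hsmul] at h1
    nlinarith
  have hφb : |φ b| ≤ C * (b - x) ^ 2 := key b hb0
  have hLφabs : |L φ| ≤ C * A := abs_le.mpr ⟨hlo, hup⟩
  have heq : (L g + g x - g b) - g x = L φ - φ b := by
    rw [hLφ]; simp [hφ]; ring
  rw [heq]
  calc |L φ - φ b| ≤ |L φ| + |φ b| := abs_sub _ _
    _ ≤ C * A + C * (b - x) ^ 2 := add_le_add hLφabs hφb
    _ = C * (A + (b - x) ^ 2) := by ring
end

section
/- Let $f : [0,\infty) \to \mathbb{R}$ with $|f(t)| \le M_f(1+t^2)$ for all $t \ge 0$, and let $a > 0$. Suppose $f$ is uniformly continuous on $[0, a+1]$ with modulus of continuity $\omega_{a+1}(f, \cdot)$. Then for all $x \in [0,a]$, $t \ge 0$, and $\delta > 0$: $|f(t) - f(x)| \le 4 M_f (1+a^2)(t-x)^2 + \left(1 + \frac{|t-x|}{\delta}\right)\omega_{a+1}(f,\delta)$. -/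
/-- Modulus of continuity of `f` on the interval `[0, a+1]`. -/
noncomputable def modulusOn (f : ℝ → ℝ) (a δ : ℝ) : ℝ :=
  sSup {y : ℝ | ∃ u v : ℝ, u ∈ Set.Icc 0 (a + 1) ∧ v ∈ Set.Icc 0 (a + 1) ∧
    |u - v| ≤ δ ∧ y = |f u - f v|}

lemma modulusOn_bddAbove (f : ℝ → ℝ) (M a δ : ℝ)
    (hf : ∀ t, 0 ≤ t → |f t| ≤ M * (1 + t ^ 2)) (ha : 0 ≤ a) :
    BddAbove {y : ℝ | ∃ u v : ℝ, u ∈ Set.Icc 0 (a + 1) ∧ v ∈ Set.Icc 0 (a + 1) ∧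
      |u - v| ≤ δ ∧ y = |f u - f v|} := by
  refine ⟨2 * M * (1 + (a + 1) ^ 2), ?_⟩
  rintro y ⟨u, v, ⟨hu0, hu1⟩, ⟨hv0, hv1⟩, -, rfl⟩
  have h1 := hf u hu0
  have h2 := hf v hv0
  have hMpos : 0 ≤ M := by
    have := hf 0 le_rfl
    have := abs_nonneg (f 0)
    nlinarith
  have h3 : |f u - f v| ≤ |f u| + |f v| := abs_sub _ _
  nlinarith [sq_nonneg u, sq_nonneg v, mul_nonneg hMpos (mul_nonneg (sub_nonneg.mpr hu1) (by linarith : (0:ℝ) ≤ u + (a+1))), mul_nonneg hMpos (mul_nonneg (sub_nonneg.mpr hv1) (by linarith : (0:ℝ) ≤ v + (a+1)))]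

lemma modulus_pair (f : ℝ → ℝ) (M a δ : ℝ)
    (hf : ∀ t, 0 ≤ t → |f t| ≤ M * (1 + t ^ 2)) (ha : 0 ≤ a)
    (u v : ℝ) (hu : u ∈ Set.Icc 0 (a + 1)) (hv : v ∈ Set.Icc 0 (a + 1))
    (h : |u - v| ≤ δ) : |f u - f v| ≤ modulusOn f a δ :=
  le_csSup (modulusOn_bddAbove f M a δ hf ha) ⟨u, v, hu, hv, h, rfl⟩

lemma modulus_nonneg (f : ℝ → ℝ) (M a δ : ℝ)
    (hf : ∀ t, 0 ≤ t → |f t| ≤ M * (1 + t ^ 2)) (ha : 0 ≤ a) (hδ : 0 ≤ δ) :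
    0 ≤ modulusOn f a δ := by
  have := modulus_pair f M a δ hf ha 0 0 ⟨le_rfl, by linarith⟩ ⟨le_rfl, by linarith⟩
    (by simpa using hδ)
  simpa using this

lemma modulus_telescope (f : ℝ → ℝ) (M a δ : ℝ)
    (hf : ∀ t, 0 ≤ t → |f t| ≤ M * (1 + t ^ 2)) (ha : 0 ≤ a) (hδ : 0 < δ)
    (u v : ℝ) (hu : u ∈ Set.Icc 0 (a + 1)) (hv : v ∈ Set.Icc 0 (a + 1)) :
    |f v - f u| ≤ (1 + |v - u| / δ) * modulusOn f a δ := by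
  have hω0 : 0 ≤ modulusOn f a δ := modulus_nonneg f M a δ hf ha hδ.le
  rcases eq_or_ne v u with rfl | hne
  · simpa using hω0
  set n : ℕ := ⌈|v - u| / δ⌉₊ with hn
  have hpos : 0 < |v - u| / δ := div_pos (abs_pos.mpr (sub_ne_zero.mpr hne)) hδ
  have hn1 : 0 < n := Nat.ceil_pos.mpr hpos
  have hnd : |v - u| / δ ≤ (n : ℝ) := Nat.le_ceil _
  have hnn : (0 : ℝ) < n := by exact_mod_cast hn1
  set p : ℕ → ℝ := fun i => u + (i : ℝ) / n * (v - u) with hp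
  have hp0 : p 0 = u := by simp [hp]
  have hpn : p n = v := by
    simp only [hp, div_self hnn.ne']
    ring
  have hmem : ∀ i ≤ n, p i ∈ Set.Icc 0 (a + 1) := by
    intro i hi
    have h1 : (i : ℝ) ≤ n := by exact_mod_cast hi
    have h2 : (0 : ℝ) ≤ i := Nat.cast_nonneg i
    have hs0 : 0 ≤ (i : ℝ) / n := div_nonneg h2 hnn.le
    have hs1 : (i : ℝ) / n ≤ 1 := (div_le_one hnn).mpr h1
    obtain ⟨hu0, hu1⟩ := hu
    obtain ⟨hv0, hv1⟩ := hv
    have hpi : p i = (1 - (i : ℝ) / n) * u + ((i : ℝ) / n) * v := by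
      simp only [hp]; ring
    rw [Set.mem_Icc, hpi]
    constructor
    · nlinarith [mul_nonneg (by linarith : (0:ℝ) ≤ 1 - (i:ℝ)/n) hu0, mul_nonneg hs0 hv0]
    · nlinarith [mul_nonneg (by linarith : (0:ℝ) ≤ 1 - (i:ℝ)/n) (by linarith : (0:ℝ) ≤ a + 1 - u),
        mul_nonneg hs0 (by linarith : (0:ℝ) ≤ a + 1 - v)]
  have hstep : ∀ i, |p (i + 1) - p i| ≤ δ := by
    intro i
    have hdiff : p (i + 1) - p i = (v - u) / n := by
      simp only [hp]
      push_cast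
      field_simp
      ring
    rw [hdiff, abs_div, abs_of_pos hnn, div_le_iff₀ hnn]
    rw [div_le_iff₀ hδ] at hnd
    linarith
  have htel : f v - f u = ∑ i ∈ Finset.range n, (f (p (i + 1)) - f (p i)) := by
    rw [Finset.sum_range_sub (fun i => f (p i)), hp0, hpn]
  calc |f v - f u| = |∑ i ∈ Finset.range n, (f (p (i + 1)) - f (p i))| := by rw [htel]
    _ ≤ ∑ i ∈ Finset.range n, |f (p (i + 1)) - f (p i)| := Finset.abs_sum_le_sum_abs _ _
    _ ≤ ∑ _i ∈ Finset.range n, modulusOn f a δ := by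
        refine Finset.sum_le_sum fun i hi => ?_
        have hi' : i < n := Finset.mem_range.mp hi
        exact modulus_pair f M a δ hf ha _ _ (hmem (i+1) hi') (hmem i hi'.le) (hstep i)
    _ = (n : ℝ) * modulusOn f a δ := by rw [Finset.sum_const, Finset.card_range]; ring
    _ ≤ (1 + |v - u| / δ) * modulusOn f a δ := by
        have : (n : ℝ) ≤ |v - u| / δ + 1 := le_of_lt (Nat.ceil_lt_add_one hpos.le)
        nlinarith

theorem growth_modulus_estimate (f : ℝ → ℝ) (M : ℝ) (hM : 0 < M)
    (hf : ∀ t, 0 ≤ t → |f t| ≤ M * (1 + t ^ 2))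
    (a : ℝ) (ha : 0 < a) (hcont : ContinuousOn f (Set.Icc 0 (a + 1)))
    (x : ℝ) (hx : x ∈ Set.Icc 0 a) (t : ℝ) (ht : 0 ≤ t)
    (δ : ℝ) (hδ : 0 < δ) :
    |f t - f x| ≤ 4 * M * (1 + a ^ 2) * (t - x) ^ 2
      + (1 + |t - x| / δ) * modulusOn f a δ := by
  obtain ⟨hx0, hxa⟩ := hx
  have hω0 : 0 ≤ modulusOn f a δ := modulus_nonneg f M a δ hf ha.le hδ.le
  have hcoef : 0 ≤ 1 + |t - x| / δ := by positivity
  by_cases hcase : |t - x| < 1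
  · have htx : t - x ≤ |t - x| := le_abs_self _
    have ht1 : t ≤ a + 1 := by linarith
    have hkey := modulus_telescope f M a δ hf ha.le hδ
      x t ⟨hx0, by linarith⟩ ⟨ht, ht1⟩
    have hsq : 0 ≤ 4 * M * (1 + a ^ 2) * (t - x) ^ 2 := by positivity
    calc |f t - f x| ≤ (1 + |t - x| / δ) * modulusOn f a δ := hkey
      _ ≤ _ := by linarith
  · push_neg at hcase
    have hsq : 1 ≤ (t - x) ^ 2 := by nlinarith [sq_abs (t - x), abs_nonneg (t - x)]
    have htx : t - x ≤ |t - x| := le_abs_self _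
    have h1 := hf t ht
    have h2 := hf x hx0
    have h3 : |f t - f x| ≤ |f t| + |f x| := abs_sub _ _
    have hterm : 0 ≤ (1 + |t - x| / δ) * modulusOn f a δ := mul_nonneg hcoef hω0
    have habs2 : |t - x| ^ 2 = (t - x) ^ 2 := sq_abs _
    have hmain : |f t - f x| ≤ 4 * M * (1 + a ^ 2) * (t - x) ^ 2 := by
      have hxd : t ≤ x + |t - x| := by linarith
      have ht2 : t ^ 2 ≤ (x + |t - x|) ^ 2 := by nlinarith [abs_nonneg (t - x)]
      have hx2 : x ^ 2 ≤ a ^ 2 := by nlinarith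
      have hcross : x * |t - x| ≤ a * |t - x| :=
        mul_le_mul_of_nonneg_right hxa (abs_nonneg _)
      have h2ad : 2 * a * |t - x| ≤ a ^ 2 + (t - x) ^ 2 := by
        nlinarith [sq_nonneg (a - |t - x|)]
      have ht2' : t ^ 2 ≤ 2 * a ^ 2 + 2 * (t - x) ^ 2 := by nlinarith
      nlinarith [mul_le_mul_of_nonneg_left ht2' hM.le,
        mul_le_mul_of_nonneg_left hx2 hM.le,
        mul_nonneg hM.le (sub_nonneg.mpr hsq),
        mul_nonneg (mul_nonneg hM.le (sq_nonneg a)) (by linarith : (0:ℝ) ≤ 4 * (t - x) ^ 2 - 3)]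
    linarith
end

section
/- Let $L$ be a positive linear functional with $L(1)=1$ on a suitable function space containing polynomials, and let $f$ satisfy $|f(t)-f(x)| \le \phi(t)\big(1+\frac{|t-x|}{\delta}\big)\Omega$ for all $t \ge 0$, where $\phi \ge 0$ and $\Omega, \delta > 0$. Then $|L(f) - f(x)| \le \big(L(\phi) + \frac{1}{\delta}\sqrt{L(\phi^2)}\sqrt{L((t-x)^2)}\big)\,\Omega$. -/
theorem functional_estimate_cauchy_schwarz (L : (ℝ → ℝ) → ℝ)
    (hadd : ∀ f g : ℝ → ℝ, L (f + g) = L f + L g)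
    (hsmul : ∀ (c : ℝ) (f : ℝ → ℝ), L (c • f) = c * L f)
    (hpos : ∀ g : ℝ → ℝ, (∀ t, 0 ≤ t → 0 ≤ g t) → 0 ≤ L g)
    (hone : L (fun _ => 1) = 1)
    (f φ : ℝ → ℝ) (x : ℝ) (hx : 0 ≤ x)
    (hφ : ∀ t, 0 ≤ t → 0 ≤ φ t)
    (Ω δ : ℝ) (hΩ : 0 < Ω) (hδ : 0 < δ)
    (hfd : ∀ t, 0 ≤ t → |f t - f x| ≤ φ t * (1 + |t - x| / δ) * Ω) :
    |L f - f x| ≤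
      (L φ + (1 / δ) * Real.sqrt (L (fun t => φ t ^ 2)) *
        Real.sqrt (L (fun t => (t - x) ^ 2))) * Ω := by
  -- helper: L of a linear combination
  have hcomb : ∀ (a b : ℝ) (g h : ℝ → ℝ),
      L (fun t => a * g t + b * h t) = a * L g + b * L h := by
    intro a b g h
    have : (fun t => a * g t + b * h t) = a • g + b • h := by
      funext t; simp
    rw [this, hadd, hsmul, hsmul]
  set A := L (fun t => φ t ^ 2) with hA
  set B := L (fun t => (t - x) ^ 2) with hB
  set C := L (fun t => φ t * |t - x|) with hC
  have hA0 : 0 ≤ A := hpos _ (fun t ht => by positivity)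
  have hB0 : 0 ≤ B := hpos _ (fun t ht => by positivity)
  have hC0 : 0 ≤ C := hpos _ (fun t ht => mul_nonneg (hφ t ht) (abs_nonneg _))
  -- quadratic nonnegativity
  have hquad : ∀ lam : ℝ, 0 ≤ B * lam ^ 2 + (-2 * C) * lam + A := by
    intro lam
    have key : L (fun t => (φ t - lam * |t - x|) ^ 2)
        = B * lam ^ 2 + (-2 * C) * lam + A := by
      have e1 : (fun t => (φ t - lam * |t - x|) ^ 2)
          = fun t => 1 * (φ t ^ 2) +
              1 * ((lam ^ 2) * ((t - x) ^ 2) + (-2 * lam) * (φ t * |t - x|)) := by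
        funext t
        have : |t - x| ^ 2 = (t - x) ^ 2 := sq_abs _
        ring_nf
        nlinarith [sq_abs (t - x)]
      rw [e1, hcomb]
      have e2 : L (fun t => lam ^ 2 * (t - x) ^ 2 + -2 * lam * (φ t * |t - x|))
          = lam ^ 2 * B + (-2 * lam) * C := hcomb _ _ _ _
      rw [e2]; ring
    have := hpos (fun t => (φ t - lam * |t - x|) ^ 2) (fun t ht => by positivity)
    linarith [key ▸ this]
  have hdisc : discrim B (-2 * C) A ≤ 0 := discrim_le_zero (fun lam => by nlinarith [hquad lam])
  have hCS : C ^ 2 ≤ A * B := by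
    simp only [discrim] at hdisc; nlinarith
  have hCsq : C ≤ Real.sqrt A * Real.sqrt B := by
    have h1 : C = Real.sqrt (C ^ 2) := by
      rw [Real.sqrt_sq hC0]
    rw [h1, ← Real.sqrt_mul hA0]
    exact Real.sqrt_le_sqrt hCS
  -- bound |L f - f x|
  have hmono : ∀ g h : ℝ → ℝ, (∀ t, 0 ≤ t → g t ≤ h t) → L g ≤ L h := by
    intro g h hgh
    have : 0 ≤ L (fun t => 1 * h t + (-1) * g t) :=
      hpos _ (fun t ht => by nlinarith [hgh t ht])
    rw [hcomb] at this; linarith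
  have hLsub : L (fun t => f t - f x) = L f - f x := by
    have e : (fun t => f t - f x) = fun t => 1 * f t + (-(f x)) * (fun _ => (1:ℝ)) t := by
      funext t; simp [sub_eq_add_neg]
    rw [e, hcomb, hone]; ring
  set M := L (fun t => φ t * (1 + |t - x| / δ) * Ω) with hM
  have hMval : M = (L φ + (1 / δ) * C) * Ω := by
    have e : (fun t => φ t * (1 + |t - x| / δ) * Ω)
        = fun t => Ω * φ t + (Ω / δ) * (φ t * |t - x|) := by
      funext t; field_simp
    rw [hM, e, hcomb]; ring
  have hub : L f - f x ≤ M := by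
    rw [← hLsub]
    exact hmono _ _ (fun t ht => (abs_le.mp (hfd t ht)).2)
  have hlb : -M ≤ L f - f x := by
    rw [← hLsub]
    have : L (fun t => -(φ t * (1 + |t - x| / δ) * Ω)) ≤ L (fun t => f t - f x) :=
      hmono _ _ (fun t ht => (abs_le.mp (hfd t ht)).1)
    have e : (fun t => -(φ t * (1 + |t - x| / δ) * Ω))
        = fun t => (-1) * ((fun s => φ s * (1 + |s - x| / δ) * Ω) t) + 0 * ((fun _ => (0:ℝ)) t) := by
      funext t; ring
    rw [e, hcomb] at this
    linarith
  have habs : |L f - f x| ≤ M := abs_le.mpr ⟨hlb, hub⟩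
  calc |L f - f x| ≤ M := habs
    _ = (L φ + (1 / δ) * C) * Ω := hMval
    _ ≤ (L φ + (1 / δ) * Real.sqrt A * Real.sqrt B) * Ω := by
        apply mul_le_mul_of_nonneg_right _ hΩ.le
        have : (1 / δ) * C ≤ (1 / δ) * (Real.sqrt A * Real.sqrt B) :=
          mul_le_mul_of_nonneg_left hCsq (by positivity)
        linarith [this]
    _ = (L φ + (1 / δ) * Real.sqrt A * Real.sqrt B) * Ω := by ring
end
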